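/- arXiv:1005.0287 — 4 statements merged into one kernel-verified Lean document; each statement's English description precedes it below -/
import Mathlib

section
/- A local epimorphism of commutative monoids is surjective on invertible elements: if φ: M → N is an epimorphism in the category of commutative monoids and φ⁻¹(N^×) = M^×, then φ(M^×) = N^×. -/
/-- `φ` is an epimorphism in the category of commutative monoids:
it is right-cancellable. -/
def MonEpi {M N : Type*} [CommMonoid M] [CommMonoid N] (φ : M →* N) : Prop :=
  ∀ (P : Type*) [CommMonoid P] (f g : N →* P), f.comp φ = g.comp φ → f = g

/-- A local epimorphism of commutative monoids is surjective on invertible elements. -/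
theorem local_epi_surjective_on_units {M N : Type*} [CommMonoid M] [CommMonoid N]
    (φ : M →* N) (hepi : MonEpi φ) (hloc : ∀ m : M, IsUnit (φ m) → IsUnit m) :
    ∀ n : N, IsUnit n → ∃ m : M, IsUnit m ∧ φ m = n := by
  classical
  set H : Subgroup Nˣ := (Units.map (φ : M →* N)).range with hH
  -- the "indicator with unit class" homomorphism
  let f : N →* WithZero (Nˣ ⧸ H) :=
    { toFun := fun n => if h : IsUnit n then ((h.unit : Nˣ ⧸ H) : WithZero (Nˣ ⧸ H)) else 0
      map_one' := by
        rw [dif_pos isUnit_one]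
        have h1 : (isUnit_one : IsUnit (1 : N)).unit = 1 := by ext; simp
        rw [h1]; simp
      map_mul' := by
        intro a b
        by_cases ha : IsUnit a
        · by_cases hb : IsUnit b
          · have hab : IsUnit (a * b) := ha.mul hb
            rw [dif_pos hab, dif_pos ha, dif_pos hb]
            have : hab.unit = ha.unit * hb.unit := by ext; simp
            rw [this, ← WithZero.coe_mul]
            norm_cast
          · have hab : ¬ IsUnit (a * b) := fun h => hb (isUnit_of_mul_isUnit_right h)
            rw [dif_neg hab, dif_neg hb, mul_zero]
        · have hab : ¬ IsUnit (a * b) := fun h => ha (isUnit_of_mul_isUnit_left h)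
          rw [dif_neg hab, dif_neg ha, zero_mul] }
  -- the plain indicator homomorphism
  let g : N →* WithZero (Nˣ ⧸ H) :=
    { toFun := fun n => if IsUnit n then 1 else 0
      map_one' := by simp
      map_mul' := by
        intro a b
        by_cases ha : IsUnit a
        · by_cases hb : IsUnit b
          · rw [if_pos (ha.mul hb), if_pos ha, if_pos hb, mul_one]
          · rw [if_neg (fun h => hb (isUnit_of_mul_isUnit_right h)), if_neg hb, mul_zero]
        · rw [if_neg (fun h => ha (isUnit_of_mul_isUnit_left h)), if_neg ha, zero_mul] }
  have hf : ∀ x : N, (h : IsUnit x) → f x = ((h.unit : Nˣ ⧸ H) : WithZero (Nˣ ⧸ H)) := by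
    intro x h
    show (if h : IsUnit x then ((h.unit : Nˣ ⧸ H) : WithZero (Nˣ ⧸ H)) else 0) = _
    rw [dif_pos h]
  have hg : ∀ x : N, IsUnit x → g x = 1 := by
    intro x h
    show (if IsUnit x then (1 : WithZero (Nˣ ⧸ H)) else 0) = 1
    rw [if_pos h]
  have hfg : ∀ m : M, f (φ m) = g (φ m) := by
    intro m
    by_cases hm : IsUnit (φ m)
    · have hmu : IsUnit m := hloc m hm
      rw [hf _ hm, hg _ hm]
      have hmem : hm.unit ∈ H := by
        refine ⟨hmu.unit, ?_⟩
        ext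
        simp
      have : (hm.unit : Nˣ ⧸ H) = 1 := (QuotientGroup.eq_one_iff _).mpr hmem
      rw [this]; rfl
    · show (if h : IsUnit (φ m) then ((h.unit : Nˣ ⧸ H) : WithZero (Nˣ ⧸ H)) else 0) =
        if IsUnit (φ m) then 1 else 0
      rw [dif_neg hm, if_neg hm]
  intro n hn
  suffices hmem : hn.unit ∈ H by
    obtain ⟨u, hu⟩ := hmem
    refine ⟨(u : M), u.isUnit, ?_⟩
    have := congrArg (Units.val) hu
    simpa using this
  by_contra hne
  -- the class of `n` in the quotient group is nontrivial
  have hq : (hn.unit : Nˣ ⧸ H) ≠ 1 := fun h => hne ((QuotientGroup.eq_one_iff _).mp h)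
  have ha : (Additive.ofMul ((hn.unit : Nˣ ⧸ H))) ≠ 0 := by
    simpa using hq
  -- pick a character into ℚ/ℤ detecting it
  obtain ⟨c, hc⟩ := CharacterModule.exists_character_apply_ne_zero_of_ne_zero ha
  let c' : Additive (Nˣ ⧸ H) →+ AddCircle (1 : ℚ) := AddMonoidHom.mk' (fun x => c x) (map_add c)
  let ψ : (Nˣ ⧸ H) →* Multiplicative (AddCircle (1 : ℚ)) := AddMonoidHom.toMultiplicativeRight c'
  -- transport f and g into a monoid living in an arbitrary universe
  let F : N →* ULift (WithZero (Multiplicative (AddCircle (1 : ℚ)))) :=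
    (MulEquiv.ulift.symm.toMonoidHom).comp ((WithZero.map' ψ).toMonoidHom.comp f)
  let G : N →* ULift (WithZero (Multiplicative (AddCircle (1 : ℚ)))) :=
    (MulEquiv.ulift.symm.toMonoidHom).comp ((WithZero.map' ψ).toMonoidHom.comp g)
  have hFG : F = G := by
    refine hepi _ F G ?_
    ext m
    simp only [F, G, MonoidHom.comp_apply, hfg m]
  have hn' := DFunLike.congr_fun hFG n
  simp only [F, G, MonoidHom.comp_apply, hf n hn, hg n hn] at hn'
  have h2 : (WithZero.map' ψ) ((hn.unit : Nˣ ⧸ H) : WithZero (Nˣ ⧸ H)) =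
      (WithZero.map' ψ) (1 : WithZero (Nˣ ⧸ H)) :=
    MulEquiv.ulift.symm.injective hn'
  rw [WithZero.map'_coe, map_one, ← WithZero.coe_one, WithZero.coe_inj] at h2
  -- ψ of the class equals 1, i.e. the character vanishes: contradiction
  apply hc
  have : Multiplicative.toAdd (ψ ((hn.unit : Nˣ ⧸ H))) = Multiplicative.toAdd
      (1 : Multiplicative (AddCircle (1 : ℚ))) := congrArg _ h2
  simpa [ψ, c'] using this
end

section
/- A local flat homomorphism of commutative monoids is injective: if φ: M → N is local and the base-change functor (− ⊗_M N) from M-sets to N-sets preserves finite limits, then φ is injective. -/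
section
open Relation
variable {M N : Type} [CommMonoid M] [CommMonoid N]

/-- The generating relation for the base change `T ⊗_M N` of an `M`-set `T` along
`φ : M →* N`: `(m • t, n) ∼ (t, φ(m) n)`. -/
inductive TensorRel (φ : M →* N) (T : Type) [MulAction M T] : T × N → T × N → Prop
  | mk (m : M) (t : T) (n : N) : TensorRel φ T (m • t, n) (t, φ m * n)

/-- The base change `T ⊗_M N` of an `M`-set `T` along `φ : M →* N`:
the quotient of `T × N` by the equivalence relation generated by
`(m • t, n) ∼ (t, φ(m) n)`; it carries the `N`-action on the second factor. -/
abbrev MTensor (φ : M →* N) (T : Type) [MulAction M T] : Type :=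
  Quotient (EqvGen.setoid (TensorRel φ T))

/-- The class of `(t, n)` in `T ⊗_M N`. -/
def MTensor.mk (φ : M →* N) {T : Type} [MulAction M T] (t : T) (n : N) :
    MTensor φ T :=
  Quotient.mk (EqvGen.setoid (TensorRel φ T)) (t, n)

/-- The map `T ⊗_M N → U ⊗_M N` induced by a map of `M`-sets `f : T → U`. -/
def MTensor.map (φ : M →* N) {T U : Type} [MulAction M T] [MulAction M U]
    (f : T →[M] U) : MTensor φ T → MTensor φ U :=
  Quotient.lift (fun p => MTensor.mk φ (f p.1) p.2) (by
    intro a b h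
    induction h with
    | rel x y hxy =>
      obtain ⟨m, t, n⟩ := hxy
      refine Quotient.sound ?_
      show EqvGen (TensorRel φ U) (f (m • t), n) (f t, φ m * n)
      rw [map_smul]
      exact EqvGen.rel _ _ (TensorRel.mk m (f t) n)
    | refl x => rfl
    | symm x y _ ih => exact ih.symm
    | trans x y z _ _ ih₁ ih₂ => exact ih₁.trans ih₂)

/-- The comparison map `(T × U) ⊗_M N → (T ⊗_M N) × (U ⊗_M N)`. -/
def tensorProdCompare (φ : M →* N) (T U : Type) [MulAction M T] [MulAction M U] :
    MTensor φ (T × U) → MTensor φ T × MTensor φ U :=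
  Quotient.lift (fun p => (MTensor.mk φ p.1.1 p.2, MTensor.mk φ p.1.2 p.2)) (by
    intro a b h
    induction h with
    | rel x y hxy =>
      obtain ⟨m, t, n⟩ := hxy
      exact Prod.ext (Quotient.sound (EqvGen.rel _ _ (TensorRel.mk m t.1 n)))
        (Quotient.sound (EqvGen.rel _ _ (TensorRel.mk m t.2 n)))
    | refl x => rfl
    | symm x y _ ih => exact ih.symm
    | trans x y z _ _ ih₁ ih₂ => exact ih₁.trans ih₂)

/-- The equalizer of two maps of `M`-sets is an `M`-set. -/
instance tensorEqMulAction {T U : Type} [MulAction M T] [MulAction M U]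
    (f g : T →[M] U) : MulAction M {t : T // f t = g t} where
  smul m t := ⟨m • t.1, by rw [map_smul, map_smul, t.2]⟩
  one_smul t := Subtype.ext (one_smul M t.1)
  mul_smul a b t := Subtype.ext (mul_smul a b t.1)

/-- The inclusion of the equalizer, as a map of `M`-sets. -/
def tensorEqIncl {T U : Type} [MulAction M T] [MulAction M U] (f g : T →[M] U) :
    {t : T // f t = g t} →[M] T :=
  ⟨Subtype.val, fun _ _ => rfl⟩

/-- The comparison map from `E ⊗_M N` (`E` the equalizer of `f, g`) to the equalizer
of the induced maps `T ⊗_M N ⇉ U ⊗_M N`. -/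
def tensorEqCompare (φ : M →* N) {T U : Type} [MulAction M T] [MulAction M U]
    (f g : T →[M] U) : MTensor φ {t : T // f t = g t} →
      {x : MTensor φ T // MTensor.map φ f x = MTensor.map φ g x} :=
  fun y => ⟨MTensor.map φ (tensorEqIncl f g) y, by
    induction y using Quotient.inductionOn with
    | h p =>
      show MTensor.mk φ (f p.1.1) p.2 = MTensor.mk φ (g p.1.1) p.2
      rw [p.1.2]⟩

/-- `φ : M →* N` is flat: the base change functor `(− ⊗_M N)` from `M`-sets to `N`-sets
preserves finite limits, i.e. binary products, the terminal object and equalizers. -/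
def MonFlat (φ : M →* N) : Prop :=
  (∀ (T U : Type) [MulAction M T] [MulAction M U],
      Function.Bijective (tensorProdCompare φ T U)) ∧
  (Nonempty (MTensor φ PUnit) ∧ Subsingleton (MTensor φ PUnit)) ∧
  (∀ (T U : Type) [MulAction M T] [MulAction M U] (f g : T →[M] U),
      Function.Bijective (tensorEqCompare φ f g))

end


/-- Evaluation `M ⊗_M N → N`, `(m, n) ↦ φ(m) n`, well-defined on the quotient. -/
def MTensor.eval {M N : Type} [CommMonoid M] [CommMonoid N] (φ : M →* N) : MTensor φ M → N :=
  Quotient.lift (fun p : M × N => φ p.1 * p.2) (by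
    intro a b h
    induction h with
    | rel x y hxy =>
      obtain ⟨m, t, n⟩ := hxy
      show φ (m • t) * n = φ t * (φ m * n)
      rw [smul_eq_mul, map_mul, mul_comm (φ m) (φ t), mul_assoc]
    | refl x => rfl
    | symm x y _ ih => exact ih.symm
    | trans x y z _ _ ih₁ ih₂ => exact ih₁.trans ih₂)

/-- A local flat homomorphism of commutative monoids is injective. -/
theorem local_flat_injective {M N : Type} [CommMonoid M] [CommMonoid N]
    (φ : M →* N) (hloc : ∀ m : M, IsUnit (φ m) → IsUnit m) (hflat : MonFlat φ) :
    Function.Injective φ := by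
  intro a b hab
  -- right multiplication by a and b as M-equivariant maps M → M
  let f : M →[M] M := ⟨fun x => x * a, fun m x => by
    simp [smul_eq_mul, mul_assoc]⟩
  let g : M →[M] M := ⟨fun x => x * b, fun m x => by
    simp [smul_eq_mul, mul_assoc]⟩
  -- the class of (1,1) lies in the equalizer of the induced maps
  have hmem : MTensor.map φ f (MTensor.mk φ (1 : M) 1) =
      MTensor.map φ g (MTensor.mk φ (1 : M) 1) := by
    show MTensor.mk φ (1 * a) 1 = MTensor.mk φ (1 * b) 1
    have ha : MTensor.mk φ (1 * a) 1 = MTensor.mk φ (1 : M) (φ a * 1) := by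
      refine Quotient.sound ?_
      have := Relation.EqvGen.rel _ _ (TensorRel.mk (φ := φ) a (1 : M) 1)
      exact (by simpa [smul_eq_mul] using this :
        Relation.EqvGen (TensorRel φ M) (1 * a, 1) (1, φ a * 1))
    have hb : MTensor.mk φ (1 * b) 1 = MTensor.mk φ (1 : M) (φ b * 1) := by
      refine Quotient.sound ?_
      have := Relation.EqvGen.rel _ _ (TensorRel.mk (φ := φ) b (1 : M) 1)
      exact (by simpa [smul_eq_mul] using this :
        Relation.EqvGen (TensorRel φ M) (1 * b, 1) (1, φ b * 1))
    rw [ha, hb, hab]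
  obtain ⟨y, hy⟩ := (hflat.2.2 M M f g).2 ⟨MTensor.mk φ (1 : M) 1, hmem⟩
  have hy' : MTensor.map φ (tensorEqIncl f g) y = MTensor.mk φ (1 : M) 1 :=
    congrArg Subtype.val hy
  induction y using Quotient.inductionOn with
  | h p =>
    obtain ⟨⟨x, hx⟩, n⟩ := p
    have hx' : x * a = x * b := hx
    have heq : MTensor.mk φ x n = MTensor.mk φ (1 : M) 1 := hy'
    have hval : φ x * n = 1 := by
      have := congrArg (MTensor.eval φ) heq
      simpa [MTensor.eval, MTensor.mk] using this
    have hux : IsUnit x := hloc x ⟨⟨φ x, n, hval, by rw [mul_comm] at hval; exact hval⟩, rfl⟩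
    obtain ⟨u, rfl⟩ := hux
    exact (Units.mul_right_inj u).mp hx'
end

section
/- Let φ: M → N be a homomorphism of commutative monoids and let p = φ⁻¹(N \ N^×). Then p is a prime ideal of M, and the induced map M_p → N from the localization of M at the submonoid M \ p is local. -/
def MonIdeal {M : Type*} [CommMonoid M] (I : Set M) : Prop :=
  ∀ x ∈ I, ∀ m : M, x * m ∈ I

def MonPrime {M : Type*} [CommMonoid M] (I : Set M) : Prop :=
  MonIdeal I ∧ (1 : M) ∉ I ∧ ∀ a b : M, a ∉ I → b ∉ I → a * b ∉ I

/-- For `φ : M →* N`, the preimage `p = φ⁻¹(N \ N^×)` of the non-units is a prime ideal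
of `M`, and the induced map `M_p → N` from the localization of `M` at the submonoid
`M_p = φ⁻¹(N^×)` is local: preimages of units are units. -/
theorem preimage_nonunits_prime_and_induced_map_local
    {M N : Type*} [CommMonoid M] [CommMonoid N] (φ : M →* N) :
    MonPrime {m : M | ¬ IsUnit (φ m)} ∧
    ∀ x : Localization (Submonoid.comap φ (IsUnit.submonoid N)),
      IsUnit (((Localization.monoidOf (Submonoid.comap φ (IsUnit.submonoid N))).lift
        (g := φ) (fun y => y.2)) x) → IsUnit x := by
  constructor
  · refine ⟨?_, by simp, ?_⟩
    · intro x hx m hxm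
      exact hx (isUnit_of_mul_isUnit_left (by rwa [← map_mul]))
    · intro a b ha hb hab
      simp only [Set.mem_setOf_eq, not_not] at ha hb
      exact hab (by rw [map_mul]; exact ha.mul hb)
  · intro x
    induction x using Localization.induction_on with
    | H p =>
      obtain ⟨m, s⟩ := p
      intro h
      rw [Localization.mk_eq_monoidOf_mk'] at h
      erw [Submonoid.LocalizationMap.lift_mk'] at h
      have hm : IsUnit (φ m) := by
        have h2 := h.mul (Units.isUnit ((IsUnit.liftRight (φ.domRestrict (Submonoid.comap φ (IsUnit.submonoid N))) (fun y => y.property)) (m, s).2))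
        rwa [mul_assoc, Units.inv_mul, mul_one] at h2
      refine isUnit_iff_exists_inv.2 ⟨Localization.mk (s : M) ⟨m, hm⟩, ?_⟩
      rw [Localization.mk_mul, mul_comm m (s : M)]
      exact Localization.mk_self (s * ⟨m, hm⟩)
end

section
/- For a commutative monoid M and a prime ideal p of M, the stalk at p of the structure sheaf on Spec M is the localization M_p, where the structure sheaf assigns M_a to each basic open D(a). -/
/-- The complement of a prime ideal is a submonoid. -/
def primeCompl {M : Type} [CommMonoid M] (p : Set M) (hp : MonPrime p) : Submonoid M where
  carrier := pᶜ
  one_mem' := hp.2.1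
  mul_mem' := fun ha hb => hp.2.2 _ _ ha hb

lemma pow_not_mem_prime {M : Type} [CommMonoid M] {p : Set M} (hp : MonPrime p)
    {a : M} (ha : a ∉ p) : ∀ y ∈ Submonoid.powers a, y ∉ p := by
  rintro y ⟨n, rfl⟩
  induction n with
  | zero => show a ^ 0 ∉ p; rw [pow_zero]; exact hp.2.1
  | succ n ih => show a ^ (n + 1) ∉ p; rw [pow_succ]; exact hp.2.2 _ _ ih ha

/-- The canonical map `M → M_p`. -/
noncomputable def toMp {M : Type} [CommMonoid M] (p : Set M) (hp : MonPrime p) :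
    M →* Localization (primeCompl p hp) :=
  (Localization.monoidOf (primeCompl p hp)).toMonoidHom

/-- For `a ∉ p` (i.e. `p ∈ D(a)`), the canonical map `M_a = O(D(a)) → M_p` of sections of
the structure sheaf of `Spec M` into the stalk at `p`. -/
noncomputable def iotaStalk {M : Type} [CommMonoid M] (p : Set M) (hp : MonPrime p)
    (a : M) (ha : a ∉ p) :
    Localization (Submonoid.powers a) →* Localization (primeCompl p hp) :=
  (Localization.monoidOf (Submonoid.powers a)).lift (g := toMp p hp)
    (fun y => (Localization.monoidOf (primeCompl p hp)).map_units
      ⟨y.1, pow_not_mem_prime hp ha y.1 y.2⟩)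

/-- The stalk at a prime `p` of the structure sheaf of `Spec M` (the sheaf with sections
`M_a` on the basic open `D(a)`) is the localization `M_p`: the maps `M_a → M_p` (for
`a ∉ p`) form a cocone over the canonical system of the `M_a`, and `M_p` is the colimit:
every compatible family of maps `M_a → P` (for `a ∉ p`) factors uniquely through `M_p`. -/
theorem stalk_of_structure_sheaf_is_localization (M : Type) [CommMonoid M]
    (p : Set M) (hp : MonPrime p) :
    (∀ (a : M) (ha : a ∉ p),
        (iotaStalk p hp a ha).comp ((Localization.monoidOf (Submonoid.powers a)).toMonoidHom)
          = toMp p hp) ∧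
    (∀ (P : Type) [CommMonoid P]
        (g : ∀ a : M, a ∉ p → (Localization (Submonoid.powers a) →* P)),
        (∀ (a : M) (ha : a ∉ p) (b : M) (hb : b ∉ p),
            (g a ha).comp ((Localization.monoidOf (Submonoid.powers a)).toMonoidHom)
              = (g b hb).comp ((Localization.monoidOf (Submonoid.powers b)).toMonoidHom)) →
        ∃! h : Localization (primeCompl p hp) →* P,
          ∀ (a : M) (ha : a ∉ p), h.comp (iotaStalk p hp a ha) = g a ha) := by
  constructor
  · intro a ha
    exact (Localization.monoidOf (Submonoid.powers a)).lift_comp _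
  · intro P _ g hcompat
    set f0 : M →* P :=
      (g 1 hp.2.1).comp ((Localization.monoidOf (Submonoid.powers 1)).toMonoidHom) with hf0
    have hf0' : ∀ (a : M) (ha : a ∉ p) (m : M),
        f0 m = g a ha ((Localization.monoidOf (Submonoid.powers a)).toMonoidHom m) := by
      intro a ha m
      have := congrFun (congrArg DFunLike.coe (hcompat 1 hp.2.1 a ha)) m
      exact this
    have hu : ∀ s : primeCompl p hp, IsUnit (f0 s.1) := by
      rintro ⟨s, hs⟩
      have hs' : s ∉ p := hs
      rw [hf0' s hs' s]
      exact ((Localization.monoidOf (Submonoid.powers s)).map_units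
        ⟨s, ⟨1, pow_one s⟩⟩).map (g s hs')
    refine ⟨(Localization.monoidOf (primeCompl p hp)).lift hu, ?_, ?_⟩
    · intro a ha
      apply (Localization.monoidOf (Submonoid.powers a)).epic_of_localizationMap
      ext m
      have h1 : iotaStalk p hp a ha ((Localization.monoidOf (Submonoid.powers a)).toMonoidHom m)
          = toMp p hp m :=
        (Localization.monoidOf (Submonoid.powers a)).lift_eq _ m
      simp only [MonoidHom.comp_apply, h1]
      erw [show toMp p hp m = (Localization.monoidOf (primeCompl p hp)).toMonoidHom m from rfl,
        (Localization.monoidOf (primeCompl p hp)).lift_eq hu m]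
      exact hf0' a ha m
    · intro h' hh'
      apply (Localization.monoidOf (primeCompl p hp)).epic_of_localizationMap
      ext m
      have h1 : (Localization.monoidOf (primeCompl p hp)).toMonoidHom m
          = iotaStalk p hp 1 hp.2.1 ((Localization.monoidOf (Submonoid.powers 1)).toMonoidHom m) :=
        ((Localization.monoidOf (Submonoid.powers 1)).lift_eq _ m).symm
      simp only [MonoidHom.comp_apply, h1]
      rw [← MonoidHom.comp_apply h', hh' 1 hp.2.1]
      erw [← MonoidHom.comp_apply, ← h1, (Localization.monoidOf (primeCompl p hp)).lift_eq hu m]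
end
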